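/- Let N > 0 and define, for r > N and θ ∈ (0, π): U(r) := (r − N)(4r − N)/(4r² − N²), Q(r) := r² − N²/4, ρ(r,θ) := ½ √((r − N)(4r − N)) · sinθ, and z(r,θ) := (r − 5N/8) cosθ. Then: (i) U(r)·Q(r)·sin²θ = ρ(r,θ)²; (ii) √(U(r)Q(r)) · ∂z/∂r = ∂ρ/∂θ; (iii) ∂z/∂θ = −√(U(r)Q(r)) · ∂ρ/∂r. -/

import Mathlib

/-- Weyl–Papapetrou coordinates for the Taub-Bolt instanton: for N > 0, with
U(r) = (r−N)(4r−N)/(4r²−N²), Q(r) = r² − N²/4,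
ρ(r,θ) = ½√((r−N)(4r−N))·sinθ and z(r,θ) = (r − 5N/8)cosθ, for r > N and
θ ∈ (0,π): (i) U·Q·sin²θ = ρ²; (ii) √(UQ)·∂z/∂r = ∂ρ/∂θ;
(iii) ∂z/∂θ = −√(UQ)·∂ρ/∂r. -/
theorem stmt_17 (N : ℝ) (hN : 0 < N)
    (U Q : ℝ → ℝ) (ρf zf : ℝ → ℝ → ℝ)
    (hU : ∀ r, U r = (r - N) * (4 * r - N) / (4 * r ^ 2 - N ^ 2))
    (hQ : ∀ r, Q r = r ^ 2 - N ^ 2 / 4)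
    (hρ : ∀ r θ, ρf r θ = 1 / 2 * Real.sqrt ((r - N) * (4 * r - N)) * Real.sin θ)
    (hz : ∀ r θ, zf r θ = (r - 5 * N / 8) * Real.cos θ) :
    ∀ r θ : ℝ, N < r → θ ∈ Set.Ioo 0 Real.pi →
      (U r * Q r * Real.sin θ ^ 2 = ρf r θ ^ 2 ∧
       Real.sqrt (U r * Q r) * deriv (fun r' => zf r' θ) r =
         deriv (fun θ' => ρf r θ') θ ∧
       deriv (fun θ' => zf r θ') θ =
         -(Real.sqrt (U r * Q r) * deriv (fun r' => ρf r' θ) r)) := by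
  intro r θ hr hθ
  have hNr : 0 < r := hN.trans hr
  have hP : 0 < (r - N) * (4 * r - N) := by
    apply mul_pos <;> nlinarith
  set P : ℝ := (r - N) * (4 * r - N) with hPdef
  have hsP : Real.sqrt P ≠ 0 := by positivity
  have hden : 4 * r ^ 2 - N ^ 2 ≠ 0 := by nlinarith
  have hUQ : U r * Q r = P / 4 := by
    rw [hU, hQ, hPdef, div_mul_eq_mul_div, div_eq_div_iff hden (by norm_num)]; ring
  have hsqrtUQ : Real.sqrt (U r * Q r) = Real.sqrt P / 2 := by
    rw [hUQ, show P / 4 = (Real.sqrt P / 2) ^ 2 by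
      rw [div_pow, Real.sq_sqrt hP.le]; norm_num,
      Real.sqrt_sq (by positivity)]
  -- derivative of P as a function of r
  have hPder : HasDerivAt (fun r' : ℝ => (r' - N) * (4 * r' - N)) (8 * r - 5 * N) r := by
    have h1 : HasDerivAt (fun r' : ℝ => r' - N) 1 r := (hasDerivAt_id r).sub_const N
    have h2 : HasDerivAt (fun r' : ℝ => 4 * r' - N) 4 r := by
      simpa using ((hasDerivAt_id r).const_mul 4).sub_const N
    have h : HasDerivAt (fun r' : ℝ => (r' - N) * (4 * r' - N)) (1 * (4 * r - N) + (r - N) * 4) r :=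
      h1.mul h2
    convert h using 1
    ring
  have hsqrtDer : HasDerivAt (fun r' : ℝ => Real.sqrt ((r' - N) * (4 * r' - N)))
      ((8 * r - 5 * N) / (2 * Real.sqrt P)) r := hPder.sqrt hP.ne'
  have hρr : deriv (fun r' => ρf r' θ) r
      = 1 / 2 * ((8 * r - 5 * N) / (2 * Real.sqrt P)) * Real.sin θ := by
    have h : HasDerivAt (fun r' => ρf r' θ)
        (1 / 2 * ((8 * r - 5 * N) / (2 * Real.sqrt P)) * Real.sin θ) r := by
      have h := (hsqrtDer.const_mul (1 / 2 : ℝ)).mul_const (Real.sin θ)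
      simp only [hρ]
      convert h using 1
    exact h.deriv
  have hρθ : deriv (fun θ' => ρf r θ') θ = 1 / 2 * Real.sqrt P * Real.cos θ := by
    have h : HasDerivAt (fun θ' => ρf r θ')
        (1 / 2 * Real.sqrt P * Real.cos θ) θ := by
      have h := (Real.hasDerivAt_sin θ).const_mul (1 / 2 * Real.sqrt P)
      simp only [hρ]
      convert h using 2
    exact h.deriv
  have hzr : deriv (fun r' => zf r' θ) r = Real.cos θ := by
    have h : HasDerivAt (fun r' => zf r' θ) (Real.cos θ) r := by
      have h := ((hasDerivAt_id r).sub_const (5 * N / 8)).mul_const (Real.cos θ)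
      simp only [hz]
      simpa using h
    exact h.deriv
  have hzθ : deriv (fun θ' => zf r θ') θ = (r - 5 * N / 8) * (-Real.sin θ) := by
    have h : HasDerivAt (fun θ' => zf r θ') ((r - 5 * N / 8) * (-Real.sin θ)) θ := by
      have h := (Real.hasDerivAt_cos θ).const_mul (r - 5 * N / 8)
      simp only [hz]
      convert h using 2
    exact h.deriv
  refine ⟨?_, ?_, ?_⟩
  · rw [hUQ, hρ, mul_pow, mul_pow, Real.sq_sqrt hP.le]
    ring
  · rw [hsqrtUQ, hzr, hρθ]
    ring
  · rw [hzθ, hsqrtUQ, hρr]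
    field_simp
    ring
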